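/- For all positive integers x and y, tanh(x/y) is irrational. -/

import Mathlib

open Polynomial intervalIntegral Real Filter Nat

namespace TanhIrr

/-- The Hermite polynomial `X^n (1-X)^n` over `ℤ`. -/
noncomputable def P (n : ℕ) : ℤ[X] := X ^ n * (1 - X) ^ n

lemma P_natDegree_le (n : ℕ) : (P n).natDegree ≤ 2 * n := by
  refine (natDegree_mul_le).trans ?_
  have h1 : (X ^ n : ℤ[X]).natDegree ≤ n := by simp
  have h2 : ((1 - X : ℤ[X]) ^ n).natDegree ≤ n := by
    refine (natDegree_pow_le).trans ?_
    have : (1 - X : ℤ[X]).natDegree ≤ 1 := by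
      refine (natDegree_sub_le _ _).trans ?_
      simp
    nlinarith
  omega

lemma P_coeff_eq_zero (n k : ℕ) (hk : k < n) : (P n).coeff k = 0 := by
  have : X ^ n ∣ P n := Dvd.intro _ rfl
  obtain ⟨q, hq⟩ := this
  rw [hq, coeff_X_pow_mul']
  simp [Nat.not_le.mpr hk]

lemma dvd_eval_zero (n k : ℕ) : (n ! : ℤ) ∣ (derivative^[k] (P n)).eval 0 := by
  have h0 : (derivative^[k] (P n)).eval 0 = (derivative^[k] (P n)).coeff 0 := by
    rw [coeff_zero_eq_eval_zero]
  rw [h0, coeff_iterate_derivative]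
  rcases lt_or_ge k n with h | h
  · rw [P_coeff_eq_zero n _ (by omega)]
    simp
  · rw [nsmul_eq_mul]
    have hd : (n ! : ℤ) ∣ ((0 + k).descFactorial k : ℤ) := by
      rw [zero_add, Nat.descFactorial_self]
      exact_mod_cast Nat.factorial_dvd_factorial h
    exact hd.mul_right _

lemma P_comp (n : ℕ) : (P n).comp (1 - X) = P n := by
  simp only [P, mul_comp, pow_comp, X_comp, sub_comp, one_comp]
  ring

lemma dvd_eval_one (n k : ℕ) : (n ! : ℤ) ∣ (derivative^[k] (P n)).eval 1 := by
  have h := congrArg (fun p => (derivative^[k] p).eval 0) (P_comp n)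
  simp only [iterate_derivative_comp_one_sub_X, eval_mul, eval_pow, eval_neg, eval_one,
    eval_comp, eval_sub, eval_X, sub_zero] at h
  have hdvd0 := dvd_eval_zero n k
  rw [← h] at hdvd0
  have h2 : ((-1:ℤ)^k) * ((-1:ℤ)^k * (derivative^[k] (P n)).eval 1)
      = (derivative^[k] (P n)).eval 1 := by
    rw [← mul_assoc, ← mul_pow]
    norm_num
  have h3 := hdvd0.mul_left ((-1:ℤ)^k)
  rwa [h2] at h3

/-- The auxiliary polynomial for integration by parts. -/
noncomputable def F (n m : ℕ) : ℤ[X] :=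
  ∑ k ∈ Finset.range (2 * n + 1), C ((-1) ^ k * (m : ℤ) ^ (2 * n - k)) * derivative^[k] (P n)

lemma dvd_F_eval_zero (n m : ℕ) : (n ! : ℤ) ∣ (F n m).eval 0 := by
  simp only [F, eval_finset_sum, eval_mul, eval_C]
  exact Finset.dvd_sum fun k _ => (dvd_eval_zero n k).mul_left _

lemma dvd_F_eval_one (n m : ℕ) : (n ! : ℤ) ∣ (F n m).eval 1 := by
  simp only [F, eval_finset_sum, eval_mul, eval_C]
  exact Finset.dvd_sum fun k _ => (dvd_eval_one n k).mul_left _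

lemma F_key (n m : ℕ) :
    C (m : ℤ) * F n m + derivative (F n m) = C ((m : ℤ) ^ (2 * n + 1)) * P n := by
  have hsum : C (m : ℤ) * F n m + derivative (F n m) =
      ∑ k ∈ Finset.range (2 * n + 1),
        (C ((-1) ^ k * (m : ℤ) ^ (2 * n + 1 - k)) * derivative^[k] (P n)
          - C ((-1) ^ (k+1) * (m : ℤ) ^ (2 * n + 1 - (k+1))) * derivative^[k+1] (P n)) := by
    rw [F, Finset.mul_sum, derivative_sum, ← Finset.sum_add_distrib]
    refine Finset.sum_congr rfl fun k hk => ?_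
    rw [Finset.mem_range] at hk
    rw [derivative_mul, derivative_C, zero_mul, zero_add]
    have h1 : C (m : ℤ) * (C ((-1) ^ k * (m : ℤ) ^ (2 * n - k)) * derivative^[k] (P n)) =
        C ((-1) ^ k * (m : ℤ) ^ (2 * n + 1 - k)) * derivative^[k] (P n) := by
      rw [← mul_assoc, ← C_mul]
      congr 2
      have h : 2 * n + 1 - k = (2 * n - k) + 1 := by omega
      rw [h, pow_succ]
      ring
    have h2 : C ((-1) ^ k * (m : ℤ) ^ (2 * n - k)) * derivative (derivative^[k] (P n)) =
        - (C ((-1) ^ (k+1) * (m : ℤ) ^ (2 * n + 1 - (k+1))) * derivative^[k+1] (P n)) := by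
      rw [Function.iterate_succ_apply', ← neg_mul, ← C_neg]
      congr 2
      have h : 2 * n + 1 - (k + 1) = 2 * n - k := by omega
      rw [h, pow_succ]
      ring
    rw [h1, h2]
    ring
  rw [hsum, Finset.sum_range_sub']
  have hz : derivative^[2 * n + 1] (P n) = 0 :=
    iterate_derivative_eq_zero (by have := P_natDegree_le n; omega)
  rw [hz]
  simp

/-- Real version of `P`. -/
noncomputable def Pr (n : ℕ) : ℝ[X] := (P n).map (Int.castRingHom ℝ)

noncomputable def Fr (n m : ℕ) : ℝ[X] := (F n m).map (Int.castRingHom ℝ)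

lemma Fr_key (n m : ℕ) :
    C (m : ℝ) * Fr n m + derivative (Fr n m) = C ((m : ℝ) ^ (2 * n + 1)) * Pr n := by
  have h := congrArg (fun p => p.map (Int.castRingHom ℝ)) (F_key n m)
  simpa [Polynomial.map_add, Polynomial.map_mul, derivative_map, Pr, Fr] using h

lemma hasDerivAt_aux (n m : ℕ) (t : ℝ) :
    HasDerivAt (fun x : ℝ => Real.exp (m * x) * (Fr n m).eval x)
      (Real.exp (m * t) * ((m : ℝ) ^ (2 * n + 1) * (Pr n).eval t)) t := by
  have h1 : HasDerivAt (fun x : ℝ => Real.exp (m * x)) (Real.exp (m * t) * m) t := by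
    simpa using ((hasDerivAt_id t).const_mul (m : ℝ)).exp
  have h2 : HasDerivAt (fun x : ℝ => (Fr n m).eval x) ((derivative (Fr n m)).eval t) t :=
    (Fr n m).hasDerivAt t
  have h := h1.mul h2
  refine h.congr_deriv ?_
  have hk := congrArg (fun p => p.eval t) (Fr_key n m)
  simp only [eval_add, eval_mul, eval_C] at hk
  linear_combination (Real.exp ((m : ℝ) * t)) * hk

lemma cont_aux (n m : ℕ) : Continuous fun x : ℝ => Real.exp (m * x) * (Pr n).eval x :=
  (Real.continuous_exp.comp (continuous_const.mul continuous_id)).mul (Pr n).continuous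

/-- The integral identity via FTC. -/
lemma integral_eq (n m : ℕ) :
    ∫ x in (0:ℝ)..1, Real.exp (m * x) * ((m : ℝ) ^ (2 * n + 1) * (Pr n).eval x) =
      Real.exp m * (Fr n m).eval 1 - (Fr n m).eval 0 := by
  have h := intervalIntegral.integral_eq_sub_of_hasDerivAt
    (f := fun x : ℝ => Real.exp (m * x) * (Fr n m).eval x)
    (f' := fun x : ℝ => Real.exp (m * x) * ((m : ℝ) ^ (2 * n + 1) * (Pr n).eval x))
    (a := 0) (b := 1)
    (fun t _ => hasDerivAt_aux n m t) ?_
  · simpa using h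
  · exact (((Real.continuous_exp.comp (continuous_const.mul continuous_id)).mul
      (continuous_const.mul (Pr n).continuous))).intervalIntegrable 0 1

lemma Pr_eval (n : ℕ) (x : ℝ) : (Pr n).eval x = x ^ n * (1 - x) ^ n := by
  simp [Pr, P]

noncomputable def J (n m : ℕ) : ℝ := ∫ x in (0:ℝ)..1, Real.exp (m * x) * (Pr n).eval x

lemma J_pos (n m : ℕ) : 0 < J n m := by
  apply intervalIntegral.intervalIntegral_pos_of_pos_on
  · exact (cont_aux n m).intervalIntegrable 0 1
  · intro x hx
    rw [Pr_eval]
    have h1 : (0:ℝ) < x := hx.1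
    have h2 : (0:ℝ) < 1 - x := by linarith [hx.2]
    positivity
  · norm_num

lemma J_le (n m : ℕ) : J n m ≤ Real.exp m := by
  have h : J n m ≤ ∫ _x in (0:ℝ)..1, Real.exp m := by
    apply intervalIntegral.integral_mono_on (by norm_num)
    · exact (cont_aux n m).intervalIntegrable 0 1
    · exact continuous_const.intervalIntegrable 0 1
    · intro x hx
      rw [Pr_eval]
      have h0 : (0:ℝ) ≤ x := hx.1
      have h1 : x ≤ 1 := hx.2
      have hb : x ^ n * (1 - x) ^ n ≤ 1 := by
        have hx1 : x ^ n ≤ 1 := pow_le_one₀ h0 h1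
        have hx2 : (1 - x) ^ n ≤ 1 := pow_le_one₀ (by linarith) (by linarith)
        nlinarith [pow_nonneg h0 n, pow_nonneg (by linarith : (0:ℝ) ≤ 1 - x) n]
      have he : Real.exp (m * x) ≤ Real.exp m := by
        apply Real.exp_le_exp.mpr
        nlinarith [Nat.cast_nonneg (α := ℝ) m]
      calc Real.exp (m * x) * (x ^ n * (1 - x) ^ n) ≤ Real.exp m * 1 :=
            mul_le_mul he hb (mul_nonneg (pow_nonneg h0 n) (pow_nonneg (by linarith) n)) (Real.exp_pos _).le
        _ = Real.exp m := mul_one _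
  simpa using h

lemma exp_nat_irrational (m : ℕ) (hm : 0 < m) : Irrational (Real.exp m) := by
  rw [Irrational]
  rintro ⟨q, hq⟩
  set a : ℤ := q.num with ha
  set b : ℕ := q.den with hb
  have hbpos : 0 < b := q.pos
  have hm' : (0:ℝ) < (m:ℝ) := by exact_mod_cast hm
  have hb' : (0:ℝ) < (b:ℝ) := by exact_mod_cast hbpos
  have key : ∀ n : ℕ, ∃ N : ℤ, (N : ℝ) = (b : ℝ) * ((m : ℝ) ^ (2 * n + 1) * J n m) ∧
      (n ! : ℤ) ∣ N := by
    intro n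
    refine ⟨a * (F n m).eval 1 - b * (F n m).eval 0, ?_, ?_⟩
    · have hint : (m : ℝ) ^ (2 * n + 1) * J n m =
          Real.exp m * (((F n m).eval 1 : ℤ) : ℝ) - (((F n m).eval 0 : ℤ) : ℝ) := by
        have h := integral_eq n m
        rw [J, ← intervalIntegral.integral_const_mul]
        have hcomm : ∀ x : ℝ, (m:ℝ) ^ (2*n+1) * (Real.exp (m * x) * (Pr n).eval x) =
            Real.exp (m * x) * ((m : ℝ) ^ (2 * n + 1) * (Pr n).eval x) := fun x => by ring
        simp_rw [hcomm]
        rw [h]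
        have e1 : (((F n m).eval 1 : ℤ) : ℝ) = (Fr n m).eval 1 := by simp [Fr]
        have e0 : (((F n m).eval 0 : ℤ) : ℝ) = (Fr n m).eval 0 := by simp [Fr]
        rw [e1, e0]
      have hab : (a : ℝ) = (q : ℝ) * (b : ℝ) := by
        have : (q : ℝ) = (a : ℝ) / (b : ℝ) := by
          rw [ha, hb, Rat.cast_def]
        rw [this]
        field_simp
      push_cast
      rw [hint, ← hq, hab]
      ring
    · exact dvd_sub ((dvd_F_eval_one n m).mul_left _) ((dvd_F_eval_zero n m).mul_left _)
  have hgrow : ∀ n : ℕ, (n ! : ℝ) ≤ (b : ℝ) * ((m : ℝ) ^ (2 * n + 1) * Real.exp m) := by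
    intro n
    obtain ⟨N, hN, hdvd⟩ := key n
    have hNpos : 0 < N := by
      have hr : (0:ℝ) < (N : ℝ) := by
        rw [hN]
        exact mul_pos hb' (mul_pos (pow_pos hm' _) (J_pos n m))
      exact_mod_cast hr
    have hfacN : (n ! : ℤ) ≤ N := Int.le_of_dvd hNpos hdvd
    have h1 : (n ! : ℝ) ≤ (N : ℝ) := by exact_mod_cast hfacN
    refine h1.trans ?_
    rw [hN]
    have := J_le n m
    nlinarith [J_pos n m, pow_pos hm' (2*n+1)]
  set Cc : ℝ := (b : ℝ) * (m : ℝ) * Real.exp m with hCc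
  have hC : (0:ℝ) < Cc := by positivity
  have htend := FloorSemiring.tendsto_pow_div_factorial_atTop (K := ℝ) ((m:ℝ)^2)
  have hev := htend.eventually (gt_mem_nhds (show (0:ℝ) < Cc⁻¹ by positivity))
  obtain ⟨n, hn⟩ := hev.exists
  have hfac : (0:ℝ) < (n ! : ℝ) := by exact_mod_cast Nat.factorial_pos n
  have h2 : ((m:ℝ)^2) ^ n < Cc⁻¹ * (n ! : ℝ) := by
    rw [div_lt_iff₀ hfac] at hn
    linarith
  have h4 : Cc * ((m:ℝ)^2) ^ n < (n ! : ℝ) := by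
    have := mul_lt_mul_of_pos_left h2 hC
    rwa [← mul_assoc, mul_inv_cancel₀ (ne_of_gt hC), one_mul] at this
  have hexp : ((m:ℝ)^2)^n = (m:ℝ)^(2*n) := by rw [← pow_mul]
  rw [hexp] at h4
  have h3 := hgrow n
  have h5 : (b : ℝ) * ((m : ℝ) ^ (2 * n + 1) * Real.exp m) = Cc * (m:ℝ)^(2*n) := by
    rw [hCc, pow_add, pow_one]
    ring
  rw [h5] at h3
  linarith

end TanhIrr

theorem tanh_rat_irrational (x y : ℕ) (hx : 0 < x) (hy : 0 < y) :
    Irrational (Real.tanh ((x : ℝ) / (y : ℝ))) := by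
  rintro ⟨q, hq⟩
  set t : ℝ := (x : ℝ) / (y : ℝ) with ht
  have hy' : (0:ℝ) < (y:ℝ) := by exact_mod_cast hy
  set E : ℝ := Real.exp t with hE
  have hEpos : 0 < E := Real.exp_pos t
  have hden : 0 < E ^ 2 + 1 := by positivity
  have htanh : Real.tanh t = (E ^ 2 - 1) / (E ^ 2 + 1) := by
    rw [Real.tanh_eq_sinh_div_cosh, Real.sinh_eq, Real.cosh_eq, Real.exp_neg, ← hE]
    rw [div_div_div_cancel_right₀]
    · field_simp
    · norm_num
  rw [htanh] at hq
  have hq1 : (q : ℝ) * (E ^ 2 + 1) = E ^ 2 - 1 := by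
    field_simp at hq
    linarith [hq]
  have hqne : (1 : ℝ) - (q : ℝ) ≠ 0 := by
    intro h
    have hq1' : (q : ℝ) = 1 := by linarith
    rw [hq1'] at hq1
    nlinarith
  have hE2 : E ^ 2 = (1 + (q:ℝ)) / (1 - (q:ℝ)) := by
    field_simp
    nlinarith [hq1]
  have hqneQ : (1 : ℚ) - q ≠ 0 := by
    intro h
    apply hqne
    have : ((1 - q : ℚ) : ℝ) = 0 := by rw [h]; norm_num
    push_cast at this
    linarith
  set r : ℚ := (1 + q) / (1 - q) with hr
  have hrr : ((r : ℚ) : ℝ) = (1 + (q:ℝ)) / (1 - (q:ℝ)) := by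
    rw [hr]
    push_cast
    ring
  have hE2r : E ^ 2 = (r : ℝ) := by
    rw [hE2, hrr]
  have hexp2x : Real.exp ((2 * x : ℕ) : ℝ) = ((r ^ y : ℚ) : ℝ) := by
    have h1 : Real.exp ((2 * x : ℕ) : ℝ) = E ^ (2 * y) := by
      rw [hE, ← Real.exp_nat_mul]
      congr 1
      have hyne : (y:ℝ) ≠ 0 := ne_of_gt hy'
      rw [ht]
      push_cast
      field_simp
    rw [h1]
    have : E ^ (2 * y) = (E ^ 2) ^ y := by rw [← pow_mul]
    rw [this, hE2r]
    norm_cast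
  exact TanhIrr.exp_nat_irrational (2 * x) (by omega) ⟨r ^ y, hexp2x.symm⟩
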